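/- arXiv:1412.2699 — 2 statements merged into one kernel-verified Lean document; each statement's English description precedes it below -/
import Mathlib

section
/- Let n ∈ ℕ, r ≥ p−1, and let m_0,…,m_r be Walsh polynomials of order p^n − 1 with polyphase components μ_{ν,s}. Then for each fixed ω ∈ G the following two conditions are equivalent: (i) Σ_{ν=0}^{r} m_ν(ω ⊕ δ_s) conj(m_ν(ω ⊕ δ_{s'})) = δ_{s,s'} for all s, s' ∈ {0,…,p−1}; (ii) Σ_{ν=0}^{r} μ_{ν,s}(Aω) conj(μ_{ν,s'}(Aω)) = δ_{s,s'} for all s, s' ∈ {0,…,p−1}. -/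
open MeasureTheory Filter Topology Matrix

noncomputable section

namespace Vilenkin

/-- The underlying additive subgroup of `ℤ → ZMod p` consisting of sequences that
vanish for all sufficiently small indices. -/
def VilSub (p : ℕ) : AddSubgroup (ℤ → ZMod p) where
  carrier := {x | ∃ k : ℤ, ∀ j < k, x j = 0}
  zero_mem' := ⟨0, fun _ _ => rfl⟩
  add_mem' := by
    rintro a b ⟨ka, hka⟩ ⟨kb, hkb⟩
    refine ⟨min ka kb, fun j hj => ?_⟩
    have h1 := hka j (lt_of_lt_of_le hj (min_le_left _ _))
    have h2 := hkb j (lt_of_lt_of_le hj (min_le_right _ _))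
    show a j + b j = 0
    rw [h1, h2, add_zero]
  neg_mem' := by
    rintro a ⟨ka, hka⟩
    refine ⟨ka, fun j hj => ?_⟩
    show -a j = 0
    rw [hka j hj, neg_zero]

/-- The Vilenkin group `G = G_p`. -/
abbrev Vil (p : ℕ) := {x : ℤ → ZMod p // x ∈ VilSub p}

/-- The (iterated) shift automorphism: `Ash p t x` is `A^t x`, with `(A x)_j = x_{j+1}`. -/
def Ash (p : ℕ) (t : ℤ) (x : Vil p) : Vil p :=
  ⟨fun j => x.1 (j + t), by
    obtain ⟨k, hk⟩ := x.2
    exact ⟨k - t, fun j hj => hk (j + t) (by omega)⟩⟩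

/-- `λ(x) = Σ_j x_j p^{-j}`. -/
def lam (p : ℕ) (x : Vil p) : ℝ := ∑' j : ℤ, ((x.1 j).val : ℝ) * (p : ℝ) ^ (-j)

/-- `λ` restricted to `H` with values in `ℕ`:  `Σ_{i ≥ 0} x_{-i} p^i`. -/
def lamNat (p : ℕ) (x : Vil p) : ℕ := ∑' i : ℕ, (x.1 (-(i : ℤ))).val * p ^ i

/-- The element `h_[α]` of `H` with `λ(h_[α]) = α` (base-`p` digits of `α`). -/
def hElt (p : ℕ) (α : ℕ) : Vil p :=
  ⟨fun j => if j ≤ 0 then ((α / p ^ (-j).toNat : ℕ) : ZMod p) else 0, by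
    refine ⟨-(α : ℤ), fun j hj => ?_⟩
    have hj0 : j ≤ 0 := by omega
    show (if j ≤ 0 then ((α / p ^ (-j).toNat : ℕ) : ZMod p) else 0) = 0
    rw [if_pos hj0]
    rcases Nat.lt_or_ge p 2 with hp | hp
    · interval_cases p
      · have hn : (-j).toNat ≠ 0 := by omega
        simp [zero_pow hn]
      · exact Subsingleton.elim _ _
    · have hn : α < (-j).toNat := by omega
      have h2 : α < 2 ^ (-j).toNat := lt_trans hn (by first | exact Nat.lt_two_pow_self | exact Nat.lt_two_pow_self _)
      have hpow : α < p ^ (-j).toNat :=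
        lt_of_lt_of_le h2 (Nat.pow_le_pow_left hp _)
      rw [Nat.div_eq_of_lt hpow]
      simp⟩

/-- The character `χ(x, ω) = exp((2πi/p) Σ_j x_j ω_{1-j})`. -/
def chi (p : ℕ) (x ω : Vil p) : ℂ :=
  Complex.exp ((2 * Real.pi * Complex.I / p) *
    ∑' j : ℤ, (((x.1 j).val : ℂ) * ((ω.1 (1 - j)).val : ℂ)))

/-- The generalized Walsh function `W_α(x) = χ(x, h_[α])`. -/
def Walsh (p : ℕ) (α : ℕ) (x : Vil p) : ℂ := chi p x (hElt p α)

/-- The element `δ_l` of `G` with `λ(δ_l) = l / p`. -/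
def deltaElt (p : ℕ) (l : ℕ) : Vil p :=
  ⟨fun j => if j = 1 then (l : ZMod p) else 0, ⟨1, fun j hj => if_neg (by omega)⟩⟩

/-- `U_l = {x : x_j = 0 for j ≤ l}`. -/
def Uball (p : ℕ) (l : ℤ) : Set (Vil p) := {x | ∀ j ≤ l, x.1 j = 0}

/-- `U = U_0`. -/
def Uset (p : ℕ) : Set (Vil p) := Uball p 0

/-- `H = {x : x_j = 0 for j > 0}`. -/
def Hset (p : ℕ) : Set (Vil p) := {x | ∀ j : ℤ, 0 < j → x.1 j = 0}

/-- The non-Archimedean norm `‖x‖ = p^{-k(x)}`, `‖θ‖ = 0`. -/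
def vnorm (p : ℕ) (x : Vil p) : ℝ := ⨆ j : ℤ, (if x.1 j ≠ 0 then (p : ℝ) ^ (-j) else 0)

/-- The Vilenkin topology, generated by the cosets of the subgroups `U_l`. -/
instance (p : ℕ) : TopologicalSpace (Vil p) :=
  TopologicalSpace.generateFrom
    {S | ∃ (x : Vil p) (l : ℤ), S = {y : Vil p | ∀ j ≤ l, y.1 j = x.1 j}}

instance (p : ℕ) : MeasurableSpace (Vil p) := borel (Vil p)

/-- `μ` is the Haar measure on `G`: translation invariant and normalized by `μ(U) = 1`. -/
def IsHaar (p : ℕ) (μ : Measure (Vil p)) : Prop :=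
  (∀ (a : Vil p) (s : Set (Vil p)), μ ((fun x => a + x) ⁻¹' s) = μ s) ∧ μ (Uset p) = 1

/-- The Fourier transform (integral form) `f̂(ω) = ∫ f(x) conj χ(x,ω) dμ(x)`. -/
def FT (p : ℕ) (μ : Measure (Vil p)) (f : Vil p → ℂ) (ω : Vil p) : ℂ :=
  ∫ x, f x * (starRingEnd ℂ) (chi p x ω) ∂μ

/-- The `L²` inner product `⟨f, g⟩ = ∫ f conj g dμ`. -/
def ip (p : ℕ) (μ : Measure (Vil p)) (f g : Vil p → ℂ) : ℂ :=
  ∫ x, f x * (starRingEnd ℂ) (g x) ∂μ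

/-- The dilated-translated system `ψ_{j,k}(x) = p^{j/2} ψ(A^j x ⊖ h_[k])`. -/
def wsys (p : ℕ) (ψ : Vil p → ℂ) (j : ℤ) (k : ℕ) (x : Vil p) : ℂ :=
  ((Real.sqrt p ^ j : ℝ) : ℂ) * ψ (Ash p j x - hElt p k)

/-- `m` is the Walsh polynomial of order `p^n - 1` with coefficients `a`. -/
def IsWalshPolyOfOrder (p n : ℕ) (a : ℕ → ℂ) (m : Vil p → ℂ) : Prop :=
  ∀ ω, m ω = ∑ α ∈ Finset.range (p ^ n), a α * (starRingEnd ℂ) (Walsh p α ω)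

/-- `m` is a Walsh polynomial. -/
def IsWalshPoly (p : ℕ) (m : Vil p → ℂ) : Prop :=
  ∃ n a, IsWalshPolyOfOrder p n a m

/-- The polyphase component `μ_{ν,s}(ω) = √p Σ_{α < p^{n-1}} a_{pα+s} conj W_α(ω)`. -/
def polyphase (p n : ℕ) (a : ℕ → ℂ) (s : ℕ) (ω : Vil p) : ℂ :=
  (Real.sqrt p : ℂ) *
    ∑ α ∈ Finset.range (p ^ (n - 1)), a (p * α + s) * (starRingEnd ℂ) (Walsh p α ω)

/-- The matrix `M(ω)` with entries `M(ω)_{l,ν} = m_ν(ω ⊕ δ_l)`. -/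
def MaskMatrix (p r : ℕ) (m : Fin (r + 1) → Vil p → ℂ) (ω : Vil p) :
    Matrix (Fin p) (Fin (r + 1)) ℂ :=
  Matrix.of fun l ν => m ν (ω + deltaElt p (l : ℕ))

/-- The unitary extension condition `M(ω) M(ω)* = I_p` for all `ω`. -/
def UEP (p r : ℕ) (m : Fin (r + 1) → Vil p → ℂ) : Prop :=
  ∀ ω : Vil p, MaskMatrix p r m ω * (MaskMatrix p r m ω)ᴴ = 1

/-- Condition (*): `Σ_{l<p} |m_0(ω ⊕ δ_l)|² ≤ 1` for all `ω`. -/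
def StarCond (p : ℕ) (m0 : Vil p → ℂ) : Prop :=
  ∀ ω : Vil p, ∑ l ∈ Finset.range p, ‖m0 (ω + deltaElt p l)‖ ^ 2 ≤ 1

/-- `φ` satisfies the refinement equation with coefficients `a` (of length `p^n`). -/
def RefinableWithMask (p n : ℕ) (a : ℕ → ℂ) (φ : Vil p → ℂ) : Prop :=
  ∀ x, φ x = p * ∑ α ∈ Finset.range (p ^ n), a α * φ (Ash p 1 x - hElt p α)

/-- The coset `U_{n,l} = A^{-n}(h_[l]) ⊕ A^{-n}(U)`. -/
def Unl (p : ℕ) (n l : ℕ) : Set (Vil p) :=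
  (fun u => Ash p (-(n : ℤ)) (hElt p l) + Ash p (-(n : ℤ)) u) '' Uset p

/-- Membership in the Sobolev space `W₂^m`, phrased in terms of (a representative of)
the Fourier transform `fhat` of `f`. -/
def MemW2 (p : ℕ) (μ : Measure (Vil p)) (m : ℕ) (fhat : Vil p → ℂ) : Prop :=
  ∀ k ≤ m, Integrable (fun ω => vnorm p ω ^ (2 * k) * ‖fhat ω‖ ^ 2) μ

/-- The Sobolev norm `‖f‖_{2,m}`, phrased via the Fourier transform `fhat` of `f`. -/
def sobNorm (p : ℕ) (μ : Measure (Vil p)) (m : ℕ) (fhat : Vil p → ℂ) : ℝ :=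
  ∑ k ∈ Finset.range (m + 1), Real.sqrt (∫ ω, vnorm p ω ^ (2 * k) * ‖fhat ω‖ ^ 2 ∂μ)

end Vilenkin
namespace Vilenkin


section Aux

variable {p : ℕ}

lemma hElt_apply (p α : ℕ) (m : ℤ) :
    (hElt p α).1 m = if m ≤ 0 then ((α / p ^ (-m).toNat : ℕ) : ZMod p) else 0 := rfl

lemma ash_apply (x : Vil p) (t j : ℤ) : (Ash p t x).1 j = x.1 (j + t) := rfl

lemma add_apply (x y : Vil p) (j : ℤ) : (x + y).1 j = x.1 j + y.1 j := rfl

lemma deltaElt_apply (p l : ℕ) (j : ℤ) :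
    (deltaElt p l).1 j = if j = 1 then (l : ZMod p) else 0 := rfl

lemma walsh_eq_sum (p : ℕ) (hp : 2 ≤ p) (α N : ℕ) (hα : α < p ^ N) (x : Vil p) :
    Walsh p α x = Complex.exp ((2 * Real.pi * Complex.I / p) *
      ∑ j ∈ Finset.Icc (1 : ℤ) (N : ℤ),
        ((x.1 j).val : ℂ) * (((α / p ^ (j - 1).toNat : ℕ) : ZMod p).val : ℂ)) := by
  unfold Walsh chi
  congr 2
  rw [tsum_eq_sum (s := Finset.Icc (1 : ℤ) (N : ℤ))]
  · refine Finset.sum_congr rfl fun j hj => ?_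
    simp only [Finset.mem_Icc] at hj
    have h1 : (1 : ℤ) - j ≤ 0 := by omega
    rw [hElt_apply, if_pos h1, show (-(1 - j)).toNat = (j - 1).toNat by omega]
  · intro j hj
    simp only [Finset.mem_Icc, not_and_or, not_le] at hj
    rcases hj with hj | hj
    · rw [hElt_apply, if_neg (by omega)]
      simp
    · rw [hElt_apply, if_pos (by omega)]
      have hdiv : α / p ^ (-(1 - j)).toNat = 0 :=
        Nat.div_eq_of_lt (lt_of_lt_of_le hα (Nat.pow_le_pow_right (by omega) (by omega)))
      rw [hdiv]
      simp

lemma walsh_single (p : ℕ) (hp : 2 ≤ p) (s : ℕ) (hs : s < p) (x : Vil p) :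
    Walsh p s x = Complex.exp ((2 * Real.pi * Complex.I / p) *
      (((x.1 1).val : ℂ) * (s : ℂ))) := by
  haveI : NeZero p := ⟨by omega⟩
  rw [walsh_eq_sum p hp s 1 (by simpa using hs) x]
  congr 2
  rw [show ((1 : ℕ) : ℤ) = (1 : ℤ) by norm_num, Finset.Icc_self, Finset.sum_singleton]
  norm_num [ZMod.val_cast_of_lt hs]

lemma walsh_mul (p : ℕ) (hp : 2 ≤ p) (β s N : ℕ) (hβ : β < p ^ N) (hs : s < p) (x : Vil p) :
    Walsh p (p * β + s) x = Walsh p β (Ash p 1 x) *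
      Complex.exp ((2 * Real.pi * Complex.I / p) * (((x.1 1).val : ℂ) * (s : ℂ))) := by
  haveI : NeZero p := ⟨by omega⟩
  have hppos : 0 < p := by omega
  have hα : p * β + s < p ^ (N + 1) := by
    calc p * β + s < p * β + p := by omega
    _ = p * (β + 1) := by ring
    _ ≤ p * p ^ N := by exact Nat.mul_le_mul_left p (by omega)
    _ = p ^ (N + 1) := by rw [pow_succ]; ring
  rw [walsh_eq_sum p hp _ (N + 1) hα x, walsh_eq_sum p hp β N hβ (Ash p 1 x),
    ← Complex.exp_add, ← mul_add]
  congr 2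
  have hsplit : Finset.Icc (1 : ℤ) ((N : ℤ) + 1) = insert (1 : ℤ) (Finset.Icc 2 ((N : ℤ) + 1)) := by
    ext m; simp only [Finset.mem_Icc, Finset.mem_insert]; omega
  have h1 : ((N + 1 : ℕ) : ℤ) = (N : ℤ) + 1 := by push_cast; ring
  rw [h1, hsplit, Finset.sum_insert (by simp)]
  have hterm1 : ((((p * β + s) / p ^ ((1 : ℤ) - 1).toNat : ℕ) : ZMod p).val : ℂ) = (s : ℂ) := by
    norm_num
    exact Nat.mod_eq_of_lt hs
  rw [hterm1]
  have hmap : Finset.Icc (2 : ℤ) ((N : ℤ) + 1)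
      = Finset.map (addRightEmbedding 1) (Finset.Icc (1 : ℤ) (N : ℤ)) := by
    rw [Finset.map_add_right_Icc]
    norm_num
  rw [hmap, Finset.sum_map]
  rw [add_comm]
  congr 1
  refine Finset.sum_congr rfl fun j hj => ?_
  simp only [Finset.mem_Icc] at hj
  simp only [addRightEmbedding_apply]
  rw [ash_apply]
  congr 3
  have hk : (j + 1 - 1).toNat = (j - 1).toNat + 1 := by omega
  rw [hk, pow_succ']
  rw [← Nat.div_div_eq_div_mul]
  congr 1
  rw [Nat.mul_add_div hppos, Nat.div_eq_of_lt hs, add_zero]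

lemma walsh_ash_delta (p : ℕ) (hp : 2 ≤ p) (β l : ℕ) (ω : Vil p) :
    Walsh p β (Ash p 1 (ω + deltaElt p l)) = Walsh p β (Ash p 1 ω) := by
  have hβ : β < p ^ β := Nat.lt_pow_self (by omega)
  rw [walsh_eq_sum p hp β β hβ, walsh_eq_sum p hp β β hβ]
  congr 2
  refine Finset.sum_congr rfl fun j hj => ?_
  simp only [Finset.mem_Icc] at hj
  rw [ash_apply, ash_apply, add_apply, deltaElt_apply, if_neg (by omega), add_zero]

lemma sum_range_mul_add (p q : ℕ) (hp : 0 < p) (f : ℕ → ℂ) :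
    ∑ α ∈ Finset.range (p * q), f α
      = ∑ s ∈ Finset.range p, ∑ β ∈ Finset.range q, f (p * β + s) := by
  rw [← Finset.sum_product']
  refine Finset.sum_nbij' (fun α => ((α % p, α / p) : ℕ × ℕ))
    (fun x => p * x.2 + x.1) ?_ ?_ ?_ ?_ ?_
  · intro α hα
    simp only [Finset.mem_range, Finset.mem_product] at *
    refine ⟨Nat.mod_lt _ hp, (Nat.div_lt_iff_lt_mul hp).mpr (by rw [mul_comm]; exact hα)⟩
  · intro x hx
    simp only [Finset.mem_range, Finset.mem_product] at *
    calc p * x.2 + x.1 < p * x.2 + p := by omega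
    _ = p * (x.2 + 1) := by ring
    _ ≤ p * q := Nat.mul_le_mul_left p (by omega)
  · intro α _
    exact Nat.div_add_mod α p
  · rintro ⟨x1, x2⟩ hx
    simp only [Finset.mem_range, Finset.mem_product] at hx
    have h1 : (p * x2 + x1) % p = x1 := by
      rw [Nat.mul_add_mod, Nat.mod_eq_of_lt hx.1]
    have h2 : (p * x2 + x1) / p = x2 := by
      rw [Nat.mul_add_div hp, Nat.div_eq_of_lt hx.1, add_zero]
    simp [h1, h2]
  · intro α _
    rw [Nat.div_add_mod]


lemma root_sum (p : ℕ) (hp : 2 ≤ p) (c c' : ℕ) (hcp : c < p) (hc'p : c' < p) :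
    ∑ s ∈ Finset.range p,
      (starRingEnd ℂ) (Complex.exp (2 * Real.pi * Complex.I / p) ^ (c * s)) *
        Complex.exp (2 * Real.pi * Complex.I / p) ^ (c' * s)
      = if c = c' then (p : ℂ) else 0 := by
  set z : ℂ := 2 * Real.pi * Complex.I / p with hz
  set w : ℂ := Complex.exp z with hw
  have hw0 : w ≠ 0 := Complex.exp_ne_zero z
  have hconjw : (starRingEnd ℂ) w = w⁻¹ := by
    rw [hw, ← Complex.exp_conj, ← Complex.exp_neg]
    congr 1
    rw [hz]
    simp only [map_div₀, _root_.map_mul, map_ofNat, Complex.conj_I, Complex.conj_ofReal,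
      map_natCast]
    ring
  set m : ℤ := (c' : ℤ) - (c : ℤ) with hm
  set ζ : ℂ := w ^ m with hζ
  have hterm : ∀ s ∈ Finset.range p,
      (starRingEnd ℂ) (w ^ (c * s)) * w ^ (c' * s) = ζ ^ s := by
    intro s _
    rw [map_pow, hconjw, inv_pow, mul_comm, ← div_eq_mul_inv,
      ← zpow_natCast w (c' * s), ← zpow_natCast w (c * s), ← zpow_sub₀ hw0, hζ,
      ← zpow_natCast (w ^ m) s, ← _root_.zpow_mul]
    congr 1
    rw [hm]
    push_cast
    ring
  rw [Finset.sum_congr rfl hterm]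
  by_cases hcc : c = c'
  · subst hcc
    have h1 : ζ = 1 := by rw [hζ, hm, sub_self, zpow_zero]
    rw [h1, if_pos rfl]
    simp
  · have hζ1 : ζ ≠ 1 := by
      intro h1
      have hprim := Complex.isPrimitiveRoot_exp p (by omega)
      rw [hζ, hw, hz] at h1
      rw [hprim.zpow_eq_one_iff_dvd m] at h1
      obtain ⟨k, hk⟩ := h1
      rw [hm] at hk
      have habs : m.natAbs < p := by rw [hm]; omega
      have h2 : p ∣ m.natAbs := by
        have := Int.natAbs_dvd_natAbs.mpr ⟨k, hk⟩
        simpa using this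
      have h3 : m.natAbs = 0 := Nat.eq_zero_of_dvd_of_lt h2 habs
      have h4 : m = 0 := Int.natAbs_eq_zero.mp h3
      rw [hm] at h4
      omega
    rw [geom_sum_eq hζ1, if_neg hcc]
    have hζp : ζ ^ p = 1 := by
      have hwp : w ^ p = 1 := by
        have hpC : (p:ℂ) ≠ 0 := Nat.cast_ne_zero.mpr (by omega)
        rw [hw, ← Complex.exp_nat_mul, hz,
          show (p : ℂ) * (2 * Real.pi * Complex.I / p) = 2 * Real.pi * Complex.I by
            rw [mul_comm]; exact div_mul_cancel₀ _ hpC]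
        exact Complex.exp_two_pi_mul_I
      rw [hζ, ← zpow_natCast (w ^ m) p, ← _root_.zpow_mul, mul_comm, _root_.zpow_mul,
        zpow_natCast, hwp, _root_.one_zpow]
    rw [hζp, sub_self, zero_div]

lemma walsh_row_orthogonal (p : ℕ) (hp : 2 ≤ p) (ω : Vil p) (l l' : ℕ)
    (hl : l < p) (hl' : l' < p) :
    ∑ s ∈ Finset.range p, (starRingEnd ℂ) (Walsh p s (ω + deltaElt p l)) *
      Walsh p s (ω + deltaElt p l')
      = if l = l' then (p : ℂ) else 0 := by
  haveI : NeZero p := ⟨by omega⟩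
  have hWs : ∀ (x : Vil p) (s : ℕ), s < p →
      Walsh p s x = Complex.exp (2 * Real.pi * Complex.I / p) ^ ((x.1 1).val * s) := by
    intro x s hs
    rw [walsh_single p hp s hs x, ← Complex.exp_nat_mul]
    congr 1
    push_cast
    ring
  rw [Finset.sum_congr rfl (fun s hs => by
    rw [hWs (ω + deltaElt p l) s (Finset.mem_range.mp hs),
      hWs (ω + deltaElt p l') s (Finset.mem_range.mp hs)])]
  rw [root_sum p hp _ _ (ZMod.val_lt _) (ZMod.val_lt _)]
  have hval : ∀ k : ℕ, ((ω + deltaElt p k).1 1) = ω.1 1 + (k : ZMod p) := by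
    intro k
    rw [add_apply, deltaElt_apply, if_pos rfl]
  by_cases hll : l = l'
  · subst hll
    rw [if_pos rfl, if_pos rfl]
  · rw [if_neg hll, if_neg ?_]
    intro h
    apply hll
    have h2 := ZMod.val_injective p h
    rw [hval, hval] at h2
    have h3 : (l : ZMod p) = (l' : ZMod p) := add_left_cancel h2
    have h4 := congrArg ZMod.val h3
    rwa [ZMod.val_cast_of_lt hl, ZMod.val_cast_of_lt hl'] at h4

lemma mask_eq (p : ℕ) (hp : 2 ≤ p) (n : ℕ) (hn : 1 ≤ n) (a : ℕ → ℂ) (m : Vil p → ℂ)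
    (hm : IsWalshPolyOfOrder p n a m) (ω : Vil p) (l : ℕ) :
    m (ω + deltaElt p l) = ∑ s ∈ Finset.range p,
      (starRingEnd ℂ) (Walsh p s (ω + deltaElt p l)) *
        ((Real.sqrt p : ℂ)⁻¹ * polyphase p n a s (Ash p 1 ω)) := by
  have hsq : (Real.sqrt p : ℂ) ≠ 0 :=
    Complex.ofReal_ne_zero.mpr (ne_of_gt (Real.sqrt_pos.mpr (by positivity)))
  rw [hm]
  have hpn : p ^ n = p * p ^ (n - 1) := by
    rw [← pow_succ']
    congr 1
    omega
  rw [hpn, sum_range_mul_add p _ (by omega)]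
  refine Finset.sum_congr rfl fun s hs => ?_
  simp only [Finset.mem_range] at hs
  rw [polyphase, inv_mul_cancel_left₀ hsq, Finset.mul_sum]
  refine Finset.sum_congr rfl fun β hβ => ?_
  simp only [Finset.mem_range] at hβ
  rw [walsh_mul p hp β s (n - 1) hβ hs (ω + deltaElt p l),
    walsh_ash_delta p hp β l ω, ← walsh_single p hp s hs (ω + deltaElt p l), _root_.map_mul]
  ring


end Aux

/-- **Proposition 4, equivalence (2.10).**  For each fixed `ω ∈ G`, the rows of `M(ω)`
form an orthonormal system iff the polyphase matrix at `Aω` has orthonormal rows: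
`Σ_ν m_ν(ω ⊕ δ_s) conj m_ν(ω ⊕ δ_{s'}) = δ_{s,s'}` for all `s, s'`
iff `Σ_ν μ_{ν,s}(Aω) conj μ_{ν,s'}(Aω) = δ_{s,s'}` for all `s, s'`. -/
theorem statement5 (p : ℕ) (hp : 2 ≤ p) (n : ℕ) (hn : 1 ≤ n) (r : ℕ) (hr : p - 1 ≤ r)
    (a : Fin (r + 1) → ℕ → ℂ) (mks : Fin (r + 1) → Vil p → ℂ)
    (hmks : ∀ ν, IsWalshPolyOfOrder p n (a ν) (mks ν)) (ω : Vil p) :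
    (∀ s s' : Fin p, ∑ ν : Fin (r + 1),
        mks ν (ω + deltaElt p (s : ℕ)) * (starRingEnd ℂ) (mks ν (ω + deltaElt p (s' : ℕ)))
          = if s = s' then 1 else 0)
    ↔ (∀ s s' : Fin p, ∑ ν : Fin (r + 1),
        polyphase p n (a ν) (s : ℕ) (Ash p 1 ω) *
          (starRingEnd ℂ) (polyphase p n (a ν) (s' : ℕ) (Ash p 1 ω))
          = if s = s' then 1 else 0) := by
  haveI : NeZero p := ⟨by omega⟩
  have hp0 : (p : ℂ) ≠ 0 := Nat.cast_ne_zero.mpr (by omega)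
  have hsq : (Real.sqrt p : ℂ) ≠ 0 :=
    Complex.ofReal_ne_zero.mpr (ne_of_gt (Real.sqrt_pos.mpr (by positivity)))
  set M : Matrix (Fin p) (Fin (r + 1)) ℂ :=
    Matrix.of fun l ν => mks ν (ω + deltaElt p (l : ℕ)) with hM
  set P : Matrix (Fin p) (Fin (r + 1)) ℂ :=
    Matrix.of fun s ν => polyphase p n (a ν) (s : ℕ) (Ash p 1 ω) with hP
  set E : Matrix (Fin p) (Fin p) ℂ :=
    Matrix.of fun l s => (starRingEnd ℂ) (Walsh p (s : ℕ) (ω + deltaElt p (l : ℕ))) with hE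
  set F : Matrix (Fin p) (Fin p) ℂ := ((p : ℂ))⁻¹ • Eᴴ with hF
  have hEE : E * Eᴴ = (p : ℂ) • (1 : Matrix (Fin p) (Fin p) ℂ) := by
    ext l l'
    have h := walsh_row_orthogonal p hp ω l l' l.2 l'.2
    rw [← Fin.sum_univ_eq_sum_range (fun s =>
      (starRingEnd ℂ) (Walsh p s (ω + deltaElt p (l : ℕ))) *
        Walsh p s (ω + deltaElt p (l' : ℕ))) p] at h
    rw [Matrix.mul_apply]
    simp only [Matrix.conjTranspose_apply, hE, Matrix.of_apply, Matrix.smul_apply,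
      Matrix.one_apply, smul_eq_mul, Complex.conj_conj, starRingEnd_apply, star_star] at h ⊢
    rw [h]
    by_cases hll : l = l'
    · rw [if_pos (Fin.val_eq_val l l' |>.mpr hll), if_pos hll, mul_one]
    · rw [if_neg (fun hc => hll (Fin.ext hc)), if_neg hll, mul_zero]
  have hEF : E * F = 1 := by
    rw [hF, Matrix.mul_smul, hEE, smul_smul, inv_mul_cancel₀ hp0, one_smul]
  have hFE : F * E = 1 := mul_eq_one_comm.mp hEF
  have hME : M = (Real.sqrt p : ℂ)⁻¹ • (E * P) := by
    ext l ν
    rw [Matrix.smul_apply, Matrix.mul_apply, smul_eq_mul, Finset.mul_sum]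
    simp only [hM, hE, hP, Matrix.of_apply]
    rw [mask_eq p hp n hn (a ν) (mks ν) (hmks ν) ω (l : ℕ)]
    rw [← Fin.sum_univ_eq_sum_range (fun s =>
      (starRingEnd ℂ) (Walsh p s (ω + deltaElt p (l : ℕ))) *
        ((Real.sqrt p : ℂ)⁻¹ * polyphase p n (a ν) s (Ash p 1 ω))) p]
    refine Finset.sum_congr rfl fun s _ => ?_
    ring
  have hmulself : ((Real.sqrt p : ℂ))⁻¹ * ((Real.sqrt p : ℂ))⁻¹ = ((p : ℂ))⁻¹ := by
    rw [← mul_inv]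
    congr 1
    rw [← Complex.ofReal_mul, Real.mul_self_sqrt (by positivity)]
    norm_num
  have hMM : M * Mᴴ = E * (P * Pᴴ) * F := by
    rw [hME, Matrix.conjTranspose_smul, Matrix.conjTranspose_mul, Matrix.smul_mul,
      Matrix.mul_smul, smul_smul]
    have hcstar : star ((Real.sqrt p : ℂ)⁻¹) = (Real.sqrt p : ℂ)⁻¹ := by
      rw [star_inv₀]
      congr 1
      exact Complex.conj_ofReal _
    rw [hcstar, hmulself, hF]
    rw [Matrix.mul_smul]
    simp only [Matrix.mul_assoc]
  have key : ∀ X : Matrix (Fin p) (Fin p) ℂ, F * (E * (X * F)) * E = X := by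
    intro X
    calc F * (E * (X * F)) * E = (F * E) * X * (F * E) := by
          simp only [Matrix.mul_assoc]
    _ = X := by rw [hFE, Matrix.one_mul, Matrix.mul_one]
  have hiff : ∀ (N : ℕ) (A : Matrix (Fin p) (Fin N) ℂ),
      (∀ s s' : Fin p, ∑ ν : Fin N, A s ν * (starRingEnd ℂ) (A s' ν)
        = if s = s' then 1 else 0) ↔ A * Aᴴ = 1 := by
    intro N A
    rw [← Matrix.ext_iff]
    refine forall_congr' fun s => forall_congr' fun s' => ?_
    rw [Matrix.mul_apply, Matrix.one_apply]
    simp only [Matrix.conjTranspose_apply, starRingEnd_apply]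
  constructor
  · intro h
    have h1 : M * Mᴴ = 1 := (hiff (r + 1) M).mp (fun s s' => h s s')
    have h2 : P * Pᴴ = 1 := by
      have hk := key (P * Pᴴ)
      rw [← Matrix.mul_assoc E (P * Pᴴ) F, ← hMM, h1, Matrix.mul_one, hFE] at hk
      exact hk.symm
    exact fun s s' => ((hiff (r + 1) P).mpr h2) s s'
  · intro h
    have h2 : P * Pᴴ = 1 := (hiff (r + 1) P).mp (fun s s' => h s s')
    have h1 : M * Mᴴ = 1 := by
      rw [hMM, h2, Matrix.mul_one, hEF]
    exact fun s s' => ((hiff (r + 1) M).mpr h1) s s'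


end Vilenkin
end
end

section
/- Let n ∈ ℕ, r ≥ p−1, and let m_0,…,m_r be Walsh polynomials of order p^n − 1 with polyphase components μ_{ν,s}. Then for all ν, ν' ∈ {0,…,r} and every ω ∈ G: Σ_{k=0}^{p−1} m_ν(ω ⊕ δ_k) conj(m_{ν'}(ω ⊕ δ_k)) = Σ_{k=0}^{p−1} μ_{ν,k}(Aω) conj(μ_{ν',k}(Aω)). -/
open MeasureTheory Filter Topology Matrix

noncomputable section

namespace Vilenkin

/-- `e_p(t) = exp(2πi t.val / p)`. -/
noncomputable def ep (p : ℕ) (t : ZMod p) : ℂ :=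
  Complex.exp (2 * Real.pi * Complex.I / p * t.val)

lemma ep_nat {p : ℕ} (hp : 2 ≤ p) (N : ℕ) :
    Complex.exp (2 * Real.pi * Complex.I / p * N) = ep p (N : ZMod p) := by
  haveI : NeZero p := ⟨by omega⟩
  obtain ⟨q, hq⟩ : ∃ q, N = p * q + N % p := ⟨N / p, (Nat.div_add_mod N p).symm⟩
  rw [ep, ZMod.val_natCast]
  conv_lhs => rw [hq]
  have hp0 : (p : ℂ) ≠ 0 := by simp only [ne_eq, Nat.cast_eq_zero]; omega
  have h1 : 2 * Real.pi * Complex.I / p * ((p * q + N % p : ℕ) : ℂ)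
      = (q : ℤ) * (2 * Real.pi * Complex.I) + 2 * Real.pi * Complex.I / p * ((N % p : ℕ) : ℂ) := by
    push_cast; field_simp
  rw [h1, Complex.exp_add, Complex.exp_int_mul_two_pi_mul_I, one_mul]

lemma ep_zero {p : ℕ} (hp : 2 ≤ p) : ep p 0 = 1 := by
  haveI : NeZero p := ⟨by omega⟩
  simp [ep]

lemma ep_add {p : ℕ} (hp : 2 ≤ p) (a b : ZMod p) :
    ep p (a + b) = ep p a * ep p b := by
  haveI : NeZero p := ⟨by omega⟩
  have h : ((a.val + b.val : ℕ) : ZMod p) = a + b := by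
    push_cast [ZMod.natCast_val, ZMod.cast_id]
    ring
  calc ep p (a + b) = ep p ((a.val + b.val : ℕ) : ZMod p) := by rw [h]
    _ = Complex.exp (2 * Real.pi * Complex.I / p * ((a.val + b.val : ℕ) : ℂ)) :=
        (ep_nat hp _).symm
    _ = ep p a * ep p b := by
        rw [ep, ep, ← Complex.exp_add]; congr 1; push_cast; ring

lemma ep_ne_zero {p : ℕ} (t : ZMod p) : ep p t ≠ 0 := Complex.exp_ne_zero _

lemma ep_pow {p : ℕ} (hp : 2 ≤ p) (k : ℕ) (t : ZMod p) :
    ep p ((k : ZMod p) * t) = ep p t ^ k := by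
  haveI : NeZero p := ⟨by omega⟩
  have h : ((k * t.val : ℕ) : ZMod p) = (k : ZMod p) * t := by
    push_cast [ZMod.natCast_val, ZMod.cast_id]
    ring
  calc ep p ((k : ZMod p) * t) = ep p ((k * t.val : ℕ) : ZMod p) := by rw [h]
    _ = Complex.exp (2 * Real.pi * Complex.I / p * ((k * t.val : ℕ) : ℂ)) :=
        (ep_nat hp _).symm
    _ = ep p t ^ k := by
        rw [ep, ← Complex.exp_nat_mul]; congr 1; push_cast; ring

lemma conj_ep {p : ℕ} (hp : 2 ≤ p) (t : ZMod p) :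
    (starRingEnd ℂ) (ep p t) = ep p (-t) := by
  have h1 : ep p (-t) * ep p t = 1 := by
    rw [← ep_add hp, neg_add_cancel, ep_zero hp]
  have h2 : (starRingEnd ℂ) (ep p t) * ep p t = 1 := by
    rw [ep, ← Complex.exp_conj, ← Complex.exp_add]
    have h3 : (starRingEnd ℂ) (2 * Real.pi * Complex.I / p * t.val)
        + 2 * Real.pi * Complex.I / p * t.val = 0 := by
      simp only [_root_.map_mul, map_div₀, Complex.conj_I, map_ofNat, Complex.conj_ofReal,
        map_natCast]
      ring
    rw [h3, Complex.exp_zero]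
  exact mul_right_cancel₀ (ep_ne_zero t) (h2.trans h1.symm)

lemma ep_eq_one_iff {p : ℕ} (hp : 2 ≤ p) (t : ZMod p) :
    ep p t = 1 ↔ t = 0 := by
  haveI : NeZero p := ⟨by omega⟩
  constructor
  · intro h
    rw [ep, Complex.exp_eq_one_iff] at h
    obtain ⟨m, hm⟩ := h
    have hp0 : (p : ℂ) ≠ 0 := by simp only [ne_eq, Nat.cast_eq_zero]; omega
    have h2 : (2 * (Real.pi : ℂ) * Complex.I) ≠ 0 := by
      simp [Real.pi_ne_zero, Complex.I_ne_zero, Complex.ofReal_ne_zero]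
    have h5 : (t.val : ℂ) * (2 * Real.pi * Complex.I) = (↑m * ↑p) * (2 * Real.pi * Complex.I) := by
      field_simp at hm
      linear_combination (2 * (Real.pi : ℂ) * Complex.I) * hm
    have h6 : (t.val : ℂ) = (m * p : ℤ) := by
      push_cast
      exact mul_right_cancel₀ h2 h5
    have hint : (t.val : ℤ) = m * p := by exact_mod_cast h6
    have hlt : t.val < p := ZMod.val_lt t
    have hv0 : t.val = 0 := by
      rcases lt_trichotomy m 0 with hm0 | hm0 | hm0
      · nlinarith [Int.natCast_nonneg t.val, (by exact_mod_cast hp : (2:ℤ) ≤ p)]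
      · subst hm0; simp only [zero_mul] at hint; exact_mod_cast hint
      · nlinarith [(by exact_mod_cast hlt : (t.val : ℤ) < p), (by exact_mod_cast hp : (2:ℤ) ≤ p)]
    exact (ZMod.val_eq_zero t).mp hv0
  · intro h; rw [h]; exact ep_zero hp

lemma sum_ep_eq_zero {p : ℕ} (hp : 2 ≤ p) (t : ZMod p) (ht : t ≠ 0) :
    ∑ k ∈ Finset.range p, ep p ((k : ZMod p) * t) = 0 := by
  haveI : NeZero p := ⟨by omega⟩
  have hne : ep p t ≠ 1 := fun h => ht ((ep_eq_one_iff hp t).1 h)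
  calc ∑ k ∈ Finset.range p, ep p ((k : ZMod p) * t)
      = ∑ k ∈ Finset.range p, ep p t ^ k :=
        Finset.sum_congr rfl fun k _ => ep_pow hp k t
    _ = (ep p t ^ p - 1) / (ep p t - 1) := geom_sum_eq hne p
    _ = 0 := by
        rw [← ep_pow hp, ZMod.natCast_self, zero_mul, ep_zero hp]
        simp

lemma sum_range_mul_eq {M : Type*} [AddCommMonoid M] (f : ℕ → M) (p q : ℕ) :
    ∑ α ∈ Finset.range (p * q), f α
      = ∑ s ∈ Finset.range p, ∑ β ∈ Finset.range q, f (p * β + s) := by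
  induction q with
  | zero => simp
  | succ q ih =>
    rw [Nat.mul_succ, Finset.sum_range_add, ih, ← Finset.sum_add_distrib]
    exact Finset.sum_congr rfl fun s _ => (Finset.sum_range_succ _ q).symm

lemma chi_hElt {p : ℕ} (hp : 2 ≤ p) (n : ℕ) (x : Vil p) (α : ℕ) (hα : α < p ^ n) :
    chi p x (hElt p α)
      = ep p (∑ j ∈ Finset.range n, x.1 (j + 1) * ((α / p ^ j : ℕ) : ZMod p)) := by
  haveI : NeZero p := ⟨by omega⟩
  have hp1 : 1 ≤ p := by omega
  have hinj : Function.Injective (fun j : ℕ => (j : ℤ) + 1) := fun a b h => by simpa using h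
  set s : Finset ℤ := (Finset.range n).map (⟨fun j => (j : ℤ) + 1, hinj⟩ : ℕ ↪ ℤ) with hs
  have hsupp : ∀ j ∉ s, ((x.1 j).val : ℂ) * (((hElt p α).1 (1 - j)).val : ℂ) = 0 := by
    intro j hj
    simp only [hs, Finset.mem_map, Finset.mem_range, Function.Embedding.coeFn_mk] at hj
    push_neg at hj
    by_cases hj1 : 1 ≤ j
    · have hjn : (n : ℤ) < j := by
        by_contra hcon
        push_neg at hcon
        exact (hj (j - 1).toNat (by omega)) (by omega)
      have hz : (hElt p α).1 (1 - j) = 0 := by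
        show (if (1 - j) ≤ 0 then ((α / p ^ (-(1-j)).toNat : ℕ) : ZMod p) else 0) = 0
        rw [if_pos (by omega)]
        have hge : n ≤ (-(1-j)).toNat := by omega
        have hlt : α < p ^ (-(1-j)).toNat := lt_of_lt_of_le hα (Nat.pow_le_pow_right hp1 hge)
        rw [Nat.div_eq_of_lt hlt, Nat.cast_zero]
      rw [hz, ZMod.val_zero, Nat.cast_zero, mul_zero]
    · have hz : (hElt p α).1 (1 - j) = 0 := by
        show (if (1 - j) ≤ 0 then ((α / p ^ (-(1-j)).toNat : ℕ) : ZMod p) else 0) = 0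
        rw [if_neg (by omega)]
      rw [hz, ZMod.val_zero, Nat.cast_zero, mul_zero]
  rw [chi, tsum_eq_sum hsupp, Finset.sum_map]
  simp only [Function.Embedding.coeFn_mk]
  have hterm : ∀ j ∈ Finset.range n,
      ((x.1 ((j : ℤ) + 1)).val : ℂ) * (((hElt p α).1 (1 - ((j : ℤ) + 1))).val : ℂ)
        = (((x.1 ((j : ℤ) + 1)).val * (α / p ^ j % p) : ℕ) : ℂ) := by
    intro j _
    have h1 : (hElt p α).1 (1 - ((j : ℤ) + 1)) = ((α / p ^ j : ℕ) : ZMod p) := by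
      show (if (1 - ((j : ℤ) + 1)) ≤ 0
          then ((α / p ^ (-(1 - ((j : ℤ) + 1))).toNat : ℕ) : ZMod p) else 0) = _
      rw [if_pos (by omega)]
      have he : (-(1 - ((j : ℤ) + 1))).toNat = j := by omega
      rw [he]
    rw [h1, ZMod.val_natCast]
    push_cast
    ring
  rw [Finset.sum_congr rfl hterm, ← Nat.cast_sum, ep_nat hp]
  congr 1
  push_cast [ZMod.natCast_val, ZMod.cast_id, ZMod.natCast_mod]
  rfl

lemma walsh_split {p : ℕ} (hp : 2 ≤ p) {n : ℕ} (hn : 1 ≤ n) (β s k : ℕ)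
    (hβ : β < p ^ (n - 1)) (hs : s < p) (ω : Vil p) :
    Walsh p (p * β + s) (ω + deltaElt p k)
      = ep p ((ω.1 1 + (k : ZMod p)) * (s : ZMod p)) * Walsh p β (Ash p 1 ω) := by
  haveI : NeZero p := ⟨by omega⟩
  have hp1 : 1 ≤ p := by omega
  obtain ⟨m, rfl⟩ : ∃ m, n = m + 1 := ⟨n - 1, by omega⟩
  have hβm : β < p ^ m := by simpa using hβ
  have hpn : p ^ (m + 1) = p * p ^ m := by rw [pow_succ']
  have hα : p * β + s < p ^ (m + 1) := by
    have h1 : p * (β + 1) ≤ p * p ^ m := Nat.mul_le_mul_left p hβm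
    have h2 : p * (β + 1) = p * β + p := by ring
    rw [hpn]; omega
  have hβn : β < p ^ (m + 1) := lt_of_lt_of_le hβm (Nat.pow_le_pow_right hp1 (by omega))
  rw [Walsh, Walsh, chi_hElt hp (m + 1) _ _ hα, chi_hElt hp (m + 1) _ _ hβn, ← ep_add hp]
  congr 1
  have hd : ∀ j : ℕ, (p * β + s) / p ^ (j + 1) = β / p ^ j := by
    intro j
    rw [pow_succ', ← Nat.div_div_eq_div_mul]
    congr 1
    rw [Nat.mul_add_div (by omega), Nat.div_eq_of_lt hs, add_zero]
  have hadd : ∀ i : ℤ, (ω + deltaElt p k).1 i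
      = ω.1 i + (if i = 1 then (k : ZMod p) else 0) := fun i => rfl
  have hAsh : ∀ i : ℤ, (Ash p 1 ω).1 i = ω.1 (i + 1) := fun i => rfl
  have hL : ∑ j ∈ Finset.range (m + 1),
        (ω + deltaElt p k).1 (j + 1) * (((p * β + s) / p ^ j : ℕ) : ZMod p)
      = (∑ j ∈ Finset.range m, ω.1 (j + 2) * ((β / p ^ j : ℕ) : ZMod p))
          + (ω.1 1 + (k : ZMod p)) * (s : ZMod p) := by
    rw [Finset.sum_range_succ']
    congr 1
    · refine Finset.sum_congr rfl fun j _ => ?_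
      rw [hd j, hadd]
      rw [if_neg (by push_cast; omega)]
      push_cast
      ring_nf
    · rw [hadd, if_pos (by norm_num), pow_zero, Nat.div_one]
      push_cast [ZMod.natCast_self]
      ring
  have hR : ∑ j ∈ Finset.range (m + 1),
        (Ash p 1 ω).1 (j + 1) * ((β / p ^ j : ℕ) : ZMod p)
      = ∑ j ∈ Finset.range m, ω.1 (j + 2) * ((β / p ^ j : ℕ) : ZMod p) := by
    rw [Finset.sum_range_succ, Nat.div_eq_of_lt hβm]
    simp only [Nat.cast_zero, mul_zero, add_zero]
    refine Finset.sum_congr rfl fun j _ => ?_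
    rw [hAsh]
    push_cast
    ring_nf
  rw [hL, hR]
  ring


/-- **Proposition 4, identity (2.11).**  For all `ν, ν'` and every `ω ∈ G`:
`Σ_{k<p} m_ν(ω ⊕ δ_k) conj m_{ν'}(ω ⊕ δ_k) = Σ_{k<p} μ_{ν,k}(Aω) conj μ_{ν',k}(Aω)`. -/
theorem statement6 (p : ℕ) (hp : 2 ≤ p) (n : ℕ) (hn : 1 ≤ n) (r : ℕ) (hr : p - 1 ≤ r)
    (a : Fin (r + 1) → ℕ → ℂ) (mks : Fin (r + 1) → Vil p → ℂ)
    (hmks : ∀ ν, IsWalshPolyOfOrder p n (a ν) (mks ν))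
    (ν ν' : Fin (r + 1)) (ω : Vil p) :
    ∑ k ∈ Finset.range p,
        mks ν (ω + deltaElt p k) * (starRingEnd ℂ) (mks ν' (ω + deltaElt p k))
      = ∑ k ∈ Finset.range p,
          polyphase p n (a ν) k (Ash p 1 ω) *
            (starRingEnd ℂ) (polyphase p n (a ν') k (Ash p 1 ω)) := by
  haveI : NeZero p := ⟨by omega⟩
  classical
  set A := Ash p 1 ω with hA
  set Q : Fin (r + 1) → ℕ → ℂ := fun ν s =>
    ∑ β ∈ Finset.range (p ^ (n - 1)), a ν (p * β + s) * (starRingEnd ℂ) (Walsh p β A) with hQ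
  have hpoly : ∀ (ν : Fin (r + 1)) (s : ℕ),
      polyphase p n (a ν) s A = ((Real.sqrt p : ℝ) : ℂ) * Q ν s := fun ν s => rfl
  have hm : ∀ (ν : Fin (r + 1)) (k : ℕ), k < p →
      mks ν (ω + deltaElt p k)
        = ∑ s ∈ Finset.range p,
            ep p (-((ω.1 1 + (k : ZMod p)) * (s : ZMod p))) * Q ν s := by
    intro ν k hk
    have hpn : p ^ n = p * p ^ (n - 1) := by
      rw [← pow_succ']; congr 1; omega
    rw [hmks ν (ω + deltaElt p k), hpn, sum_range_mul_eq]
    refine Finset.sum_congr rfl fun s hs => ?_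
    rw [Finset.mem_range] at hs
    calc ∑ β ∈ Finset.range (p ^ (n - 1)),
          a ν (p * β + s) * (starRingEnd ℂ) (Walsh p (p * β + s) (ω + deltaElt p k))
        = ∑ β ∈ Finset.range (p ^ (n - 1)),
            ep p (-((ω.1 1 + (k : ZMod p)) * (s : ZMod p)))
              * (a ν (p * β + s) * (starRingEnd ℂ) (Walsh p β A)) := by
          refine Finset.sum_congr rfl fun β hβ => ?_
          rw [Finset.mem_range] at hβ
          rw [hA, walsh_split hp hn β s k hβ hs ω, _root_.map_mul, conj_ep hp]
          ring
      _ = _ := by rw [← Finset.mul_sum]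
  have horth : ∀ s s' : ℕ, s < p → s' < p →
      ∑ k ∈ Finset.range p,
          ep p (-((ω.1 1 + (k : ZMod p)) * (s : ZMod p)))
            * ep p ((ω.1 1 + (k : ZMod p)) * (s' : ZMod p))
        = if s = s' then (p : ℂ) else 0 := by
    intro s s' hs hs'
    have hcomb : ∀ k : ℕ,
        ep p (-((ω.1 1 + (k : ZMod p)) * (s : ZMod p)))
          * ep p ((ω.1 1 + (k : ZMod p)) * (s' : ZMod p))
        = ep p (ω.1 1 * ((s' : ZMod p) - (s : ZMod p)))
            * ep p ((k : ZMod p) * ((s' : ZMod p) - (s : ZMod p))) := by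
      intro k
      rw [← ep_add hp, ← ep_add hp]
      congr 1
      ring
    rw [Finset.sum_congr rfl fun k _ => hcomb k, ← Finset.mul_sum]
    by_cases hss : s = s'
    · subst hss
      rw [if_pos rfl, sub_self]
      simp only [mul_zero, ep_zero hp, Finset.sum_const, Finset.card_range, nsmul_eq_mul,
        mul_one, one_mul]
    · rw [if_neg hss]
      have ht : (s' : ZMod p) - (s : ZMod p) ≠ 0 := by
        intro h
        rw [sub_eq_zero] at h
        have h2 : s' = s := by
          have := congrArg ZMod.val h
          rwa [ZMod.val_cast_of_lt hs', ZMod.val_cast_of_lt hs] at this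
        exact hss h2.symm
      rw [sum_ep_eq_zero hp _ ht, mul_zero]
  have hsq : ((Real.sqrt p : ℝ) : ℂ) * ((Real.sqrt p : ℝ) : ℂ) = (p : ℂ) := by
    rw [← Complex.ofReal_mul, Real.mul_self_sqrt (by positivity)]
    norm_num
  calc ∑ k ∈ Finset.range p,
        mks ν (ω + deltaElt p k) * (starRingEnd ℂ) (mks ν' (ω + deltaElt p k))
      = ∑ k ∈ Finset.range p, ∑ s ∈ Finset.range p, ∑ s' ∈ Finset.range p,
          (ep p (-((ω.1 1 + (k : ZMod p)) * (s : ZMod p)))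
              * ep p ((ω.1 1 + (k : ZMod p)) * (s' : ZMod p)))
            * (Q ν s * (starRingEnd ℂ) (Q ν' s')) := by
        refine Finset.sum_congr rfl fun k hk => ?_
        rw [Finset.mem_range] at hk
        rw [hm ν k hk, hm ν' k hk, _root_.map_sum, Finset.sum_mul_sum]
        refine Finset.sum_congr rfl fun s _ => Finset.sum_congr rfl fun s' _ => ?_
        rw [_root_.map_mul, conj_ep hp, neg_neg]
        ring
    _ = ∑ s ∈ Finset.range p, ∑ s' ∈ Finset.range p,
          (if s = s' then (p : ℂ) else 0) * (Q ν s * (starRingEnd ℂ) (Q ν' s')) := by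
        rw [Finset.sum_comm]
        refine Finset.sum_congr rfl fun s hs => ?_
        rw [Finset.sum_comm]
        refine Finset.sum_congr rfl fun s' hs' => ?_
        rw [Finset.mem_range] at hs hs'
        rw [← Finset.sum_mul, horth s s' hs hs']
    _ = ∑ s ∈ Finset.range p, (p : ℂ) * (Q ν s * (starRingEnd ℂ) (Q ν' s)) := by
        refine Finset.sum_congr rfl fun s hs => ?_
        simp only [ite_mul, zero_mul]
        rw [Finset.sum_ite_eq, if_pos hs]
    _ = ∑ k ∈ Finset.range p,
          polyphase p n (a ν) k A * (starRingEnd ℂ) (polyphase p n (a ν') k A) := by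
        refine Finset.sum_congr rfl fun s _ => ?_
        rw [hpoly, hpoly, _root_.map_mul, Complex.conj_ofReal, ← hsq]
        ring

end Vilenkin
end
end
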